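/- Let X_G be a branch bag of a tree decomposition with children whose terminal subgraphs are H_1, ..., H_c (c a constant), and suppose H_i' ∼_P H_i with X_{H_i'} = X_{H_i} for each i. Then (H_1 ⊕_T X_G) ⊕_▷ ⋯ ⊕_▷ (H_c ⊕_T X_G) ∼_P (H_1' ⊕_T X_G) ⊕_▷ ⋯ ⊕_▷ (H_c' ⊕_T X_G). -/

import Mathlib

/-- A plain graph: vertex set and edge set (over an ambient vertex type). -/
structure PGraph (V : Type) where
  verts : Set V
  edges : Set (Sym2 V)

/-- A terminal graph: graph together with an ordered list of terminals. -/
structure TermGraph (V : Type) where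
  verts : Set V
  edges : Set (Sym2 V)
  terms : List V

variable {V : Type} [DecidableEq V]

/-- The map renaming the `i`-th terminal of `K` to the `i`-th terminal of `G`
(used to identify corresponding terminals when gluing). -/
def glueMap (G K : TermGraph V) (x : V) : V :=
  if x ∈ K.terms then G.terms.getD (K.terms.idxOf x) x else x

/-- Gluing `G ⊕ K`: disjoint union with corresponding terminals identified
(parallel edges dropped, result is a plain graph). -/
def oplus (G K : TermGraph V) : PGraph V :=
  ⟨G.verts ∪ (glueMap G K) '' K.verts, G.edges ∪ (Sym2.map (glueMap G K)) '' K.edges⟩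

/-- Gluing, keeping the terminal list of `G` (a terminal graph version of `⊕`). -/
def oplusTG (G K : TermGraph V) : TermGraph V :=
  ⟨G.verts ∪ (glueMap G K) '' K.verts, G.edges ∪ (Sym2.map (glueMap G K)) '' K.edges, G.terms⟩

/-- `G ⊕_T X`: add the vertices of `X` and make `X` the new terminal list. -/
def oplusT (G : TermGraph V) (X : List V) : TermGraph V :=
  ⟨G.verts ∪ {x | x ∈ X}, G.edges, X⟩

/-- `G ⊕_▷ H`: union of vertices and edges, keeping the terminals of `G`. -/
def oplusRhd (G H : TermGraph V) : TermGraph V :=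
  ⟨G.verts ∪ H.verts, G.edges ∪ H.edges, G.terms⟩

/-- The equivalence `G ∼_P H`: same boundary size, and for every terminal
graph `K` of matching boundary size, `P (G ⊕ K) ↔ P (H ⊕ K)`. -/
def EquivP (P : PGraph V → Prop) (G H : TermGraph V) : Prop :=
  G.terms.length = H.terms.length ∧
    ∀ K : TermGraph V, K.terms.length = G.terms.length →
      (P (oplus G K) ↔ P (oplus H K))

/-- Iterated gluing `(H_1 ⊕_T X) ⊕_▷ ⋯ ⊕_▷ (H_c ⊕_T X)` of a list of terminal
graphs below a branch bag `X`. -/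
def bigGlue (X : List V) (l : List (TermGraph V)) : TermGraph V :=
  l.foldl (fun acc H => oplusRhd acc (oplusT H X)) ⟨{x | x ∈ X}, ∅, X⟩

section Aux

variable (P : PGraph V → Prop)

lemma getD_indexOf_self (l : List V) (x : V) : l.getD (l.idxOf x) x = x := by
  by_cases h : x ∈ l
  · rw [List.getD_eq_getElem l x (List.idxOf_lt_length_iff.2 h)]
    exact List.getElem_idxOf _
  · rw [List.getD_eq_default]
    exact le_of_eq (List.idxOf_eq_length_iff.2 h).symm

/-- If the terminal lists coincide, the glue map is the identity. -/
lemma glueMap_of_terms_eq (G K : TermGraph V) (h : K.terms = G.terms) :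
    glueMap G K = id := by
  funext x
  simp only [glueMap, h, id]
  split
  · exact getD_indexOf_self _ _
  · rfl

lemma glueMap_congr (G₁ G₂ K : TermGraph V) (h : G₁.terms = G₂.terms) :
    glueMap G₁ K = glueMap G₂ K := by
  funext x; simp only [glueMap, h]

lemma oplus_of_terms_eq (G K : TermGraph V) (h : K.terms = G.terms) :
    oplus G K = ⟨G.verts ∪ K.verts, G.edges ∪ K.edges⟩ := by
  simp [oplus, glueMap_of_terms_eq G K h, Sym2.map_id, Set.image_id]

/-- One step of the fold in `bigGlue`. -/
def fstep (X : List V) (A H : TermGraph V) : TermGraph V :=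
  oplusRhd A (oplusT H X)

@[simp] lemma fstep_terms (X : List V) (A H : TermGraph V) :
    (fstep X A H).terms = A.terms := rfl

/-- Re-express gluing `K` onto `fstep X A H` as gluing a larger context onto `A`. -/
lemma oplus_swapA (X : List V) (A H K : TermGraph V) :
    oplus (fstep X A H) K =
      oplus A ⟨(H.verts ∪ {x | x ∈ X}) ∪ glueMap (fstep X A H) K '' K.verts,
        H.edges ∪ Sym2.map (glueMap (fstep X A H) K) '' K.edges, A.terms⟩ := by
  rw [oplus_of_terms_eq A ⟨(H.verts ∪ {x | x ∈ X}) ∪ glueMap (fstep X A H) K '' K.verts,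
    H.edges ∪ Sym2.map (glueMap (fstep X A H) K) '' K.edges, A.terms⟩ rfl]
  simp only [oplus, fstep, oplusRhd, oplusT]
  congr 1 <;> · ext z; simp only [Set.mem_union]; tauto

/-- Re-express gluing `K` onto `fstep X A H` as gluing a larger context onto `H`. -/
lemma oplus_swapH (X : List V) (A H K : TermGraph V) :
    oplus (fstep X A H) K =
      oplus H ⟨(A.verts ∪ {x | x ∈ X}) ∪ glueMap (fstep X A H) K '' K.verts,
        A.edges ∪ Sym2.map (glueMap (fstep X A H) K) '' K.edges, H.terms⟩ := by
  rw [oplus_of_terms_eq H ⟨(A.verts ∪ {x | x ∈ X}) ∪ glueMap (fstep X A H) K '' K.verts,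
    A.edges ∪ Sym2.map (glueMap (fstep X A H) K) '' K.edges, H.terms⟩ rfl]
  simp only [oplus, fstep, oplusRhd, oplusT]
  congr 1 <;> · ext z; simp only [Set.mem_union]; tauto

lemma EquivP.refl' (G : TermGraph V) : EquivP P G G := ⟨rfl, fun _ _ => Iff.rfl⟩

lemma EquivP.symm' {G H : TermGraph V} (h : EquivP P G H) : EquivP P H G :=
  ⟨h.1.symm, fun K hK => (h.2 K (hK.trans h.1.symm)).symm⟩

lemma EquivP.trans' {G₁ G₂ G₃ : TermGraph V} (h₁ : EquivP P G₁ G₂)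
    (h₂ : EquivP P G₂ G₃) : EquivP P G₁ G₃ :=
  ⟨h₁.1.trans h₂.1, fun K hK => (h₁.2 K hK).trans (h₂.2 K (hK.trans h₁.1))⟩

/-- Changing the accumulator to an equivalent one (with equal terminals). -/
lemma fstep_congrA (X : List V) {A₁ A₂ : TermGraph V} (H : TermGraph V)
    (hE : EquivP P A₁ A₂) (ht : A₁.terms = A₂.terms) :
    EquivP P (fstep X A₁ H) (fstep X A₂ H) := by
  refine ⟨congrArg List.length ht, fun K hK => ?_⟩
  rw [oplus_swapA X A₁ H K, oplus_swapA X A₂ H K,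
    glueMap_congr (fstep X A₂ H) (fstep X A₁ H) K (by simp [ht]), ← ht]
  exact hE.2 _ (by simpa using hK)

/-- Changing the glued-in child to an equivalent one (with equal terminals). -/
lemma fstep_congrH (X : List V) (A : TermGraph V) {H₁ H₂ : TermGraph V}
    (hE : EquivP P H₁ H₂) (ht : H₁.terms = H₂.terms) :
    EquivP P (fstep X A H₁) (fstep X A H₂) := by
  refine ⟨rfl, fun K hK => ?_⟩
  rw [oplus_swapH X A H₁ K, oplus_swapH X A H₂ K,
    glueMap_congr (fstep X A H₂) (fstep X A H₁) K rfl, ← ht]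
  exact hE.2 _ (by simp [ht])

/-- Equivalent accumulators stay equivalent through the fold. -/
lemma foldl_congrA (X : List V) (l : List (TermGraph V)) :
    ∀ {A₁ A₂ : TermGraph V}, EquivP P A₁ A₂ → A₁.terms = A₂.terms →
      EquivP P (l.foldl (fstep X) A₁) (l.foldl (fstep X) A₂) := by
  induction l with
  | nil => intro A₁ A₂ hE _; exact hE
  | cons H l ih =>
    intro A₁ A₂ hE ht
    exact ih (fstep_congrA P X H hE ht) (by simp [ht])

/-- Replacing children pairwise by equivalent ones through the fold. -/
lemma foldl_congr_list (X : List V) {l l' : List (TermGraph V)}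
    (h : List.Forall₂ (fun H H' => EquivP P H H' ∧ H.terms = H'.terms) l l') :
    ∀ A : TermGraph V, EquivP P (l.foldl (fstep X) A) (l'.foldl (fstep X) A) := by
  induction h with
  | nil => intro A; exact EquivP.refl' P _
  | @cons H H' l l' hHH _ ih =>
    intro A
    simp only [List.foldl_cons]
    exact (foldl_congrA P X l (fstep_congrH P X A hHH.1 hHH.2) rfl).trans'
      P (ih (fstep X A H'))

lemma forall₂_ofFn {α : Type*} {R : α → α → Prop} :
    ∀ {c : ℕ} (f g : Fin c → α), (∀ i, R (f i) (g i)) →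
      List.Forall₂ R (List.ofFn f) (List.ofFn g) := by
  intro c
  induction c with
  | zero => intro f g _; simp [List.ofFn_zero]
  | succ n ih =>
    intro f g h
    rw [List.ofFn_succ, List.ofFn_succ]
    exact List.Forall₂.cons (h 0) (ih _ _ fun i => h i.succ)

end Aux

/-- if `H_i' ∼_P H_i` with `X_{H_i'} = X_{H_i}` for each `i`, then
`(H_1 ⊕_T X_G) ⊕_▷ ⋯ ⊕_▷ (H_c ⊕_T X_G) ∼_P (H_1' ⊕_T X_G) ⊕_▷ ⋯ ⊕_▷ (H_c' ⊕_T X_G)`. -/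
theorem bigGlue_equivP (P : PGraph V → Prop) (c : ℕ) (XG : List V)
    (Hs Hs' : Fin c → TermGraph V)
    (hEq : ∀ i, EquivP P (Hs' i) (Hs i))
    (hTm : ∀ i, (Hs' i).terms = (Hs i).terms) :
    EquivP P (bigGlue XG (List.ofFn Hs)) (bigGlue XG (List.ofFn Hs')) := by
  have h := forall₂_ofFn (R := fun H H' => EquivP P H H' ∧ H.terms = H'.terms)
    Hs Hs' (fun i => ⟨(hEq i).symm' , (hTm i).symm⟩)
  exact foldl_congr_list P XG h _
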